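/- Let p, C > 0 and m ≥ 1. Suppose h : ℝⁿ → ℝ satisfies |h(y)| ≤ C/|y|^{2p} for |y| ≥ 1 and |h| ≤ C everywhere, and let G be a nonnegative kernel with ∫ G = 1 and G(z) ≤ C'/|z|^{2q} for some q > n/2 and constant C'. Then the convolution (h * G)(x) decays polynomially: there is a constant C'' with |(h*G)(x)| ≤ C''/|x|^{min(2p-1, 2q-n)} for |x| ≥ 2. -/

import Mathlib

open MeasureTheory Metric

/-- preservation of polynomial decay under convolution with a kernel
of mass one having polynomial decay. -/
theorem convolution_polynomial_decay (n : ℕ) (hn : 1 ≤ n) (m : ℕ) (hm : 1 ≤ m)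
    (p C : ℝ) (hp : 0 < p) (hC : 0 < C)
    (h G : EuclideanSpace ℝ (Fin n) → ℝ)
    (hh : ∀ y, 1 ≤ ‖y‖ → |h y| ≤ C / ‖y‖ ^ (2 * p))
    (hhb : ∀ y, |h y| ≤ C)
    (hG0 : ∀ z, 0 ≤ G z) (hGint : Integrable G) (hGmass : ∫ z, G z = 1)
    (q C' : ℝ) (hq : (n : ℝ) / 2 < q) (hC' : 0 < C')
    (hGdecay : ∀ z, G z ≤ C' / ‖z‖ ^ (2 * q)) :
    ∃ C'' : ℝ, 0 < C'' ∧ ∀ x : EuclideanSpace ℝ (Fin n), 2 ≤ ‖x‖ →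
      |∫ y, h y * G (x - y)| ≤ C'' / ‖x‖ ^ (min (2 * p - 1) (2 * q - n)) := by
  set r := min (2 * p - 1) (2 * q - (n : ℝ)) with hrdef
  set K := (volume (closedBall (0 : EuclideanSpace ℝ (Fin n)) 1)).toReal with hKdef
  have hK0 : 0 ≤ K := ENNReal.toReal_nonneg
  have hq0 : 0 < 2 * q := by
    have : (0:ℝ) ≤ (n:ℝ) / 2 := by positivity
    linarith
  refine ⟨C * C' * K * 2 ^ (2 * q) + C * 2 ^ (2 * p) + 1, by positivity, ?_⟩
  intro x hx
  have hx1 : (1:ℝ) ≤ ‖x‖ := by linarith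
  have hx0 : (0:ℝ) < ‖x‖ := by linarith
  have hx2 : (1:ℝ) ≤ ‖x‖ / 2 := by linarith
  have hx2' : (0:ℝ) < ‖x‖ / 2 := by linarith
  have hxr : (0:ℝ) < ‖x‖ ^ r := Real.rpow_pos_of_pos hx0 r
  by_cases hf : Integrable (fun y => h y * G (x - y))
  · -- main case
    set A : Set (EuclideanSpace ℝ (Fin n)) := closedBall 0 (‖x‖ / 2) with hAdef
    have hAmeas : MeasurableSet A := measurableSet_closedBall
    have hAvol : volume A = ENNReal.ofReal ((‖x‖/2) ^ n) * volume (closedBall (0 : EuclideanSpace ℝ (Fin n)) 1) := by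
      rw [hAdef, Measure.addHaar_closedBall' volume _ hx2'.le, finrank_euclideanSpace_fin]
    have hAvol_lt : volume A < ⊤ := measure_closedBall_lt_top
    have hAvolR : (volume A).toReal = (‖x‖/2) ^ n * K := by
      rw [hAvol, ENNReal.toReal_mul, ENNReal.toReal_ofReal (by positivity)]
    -- bound on A : for y in A, ‖x - y‖ ≥ ‖x‖/2
    have hboundA : ∀ y ∈ A, |h y * G (x - y)| ≤ C * (C' / (‖x‖/2) ^ (2*q)) := by
      intro y hy
      have hy' : ‖y‖ ≤ ‖x‖ / 2 := by simpa [hAdef] using hy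
      have hxy : ‖x‖ / 2 ≤ ‖x - y‖ := by
        have := norm_sub_norm_le x y
        linarith
      have hG1 : G (x - y) ≤ C' / (‖x‖/2) ^ (2*q) := by
        refine (hGdecay (x - y)).trans ?_
        apply div_le_div_of_nonneg_left hC'.le (by positivity)
        exact Real.rpow_le_rpow hx2'.le hxy hq0.le
      have hG2 : 0 ≤ G (x - y) := hG0 _
      rw [abs_mul, abs_of_nonneg hG2]
      exact mul_le_mul (hhb y) hG1 hG2 hC.le
    have htermA : ∫ y in A, |h y * G (x - y)| ≤
        (C * (C' / (‖x‖/2) ^ (2*q))) * ((‖x‖/2) ^ n * K) := by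
      have := norm_setIntegral_le_of_norm_le_const hAvol_lt
        (f := fun y => |h y * G (x - y)|) (C := C * (C' / (‖x‖/2) ^ (2*q)))
        (fun y hy => by rw [Real.norm_eq_abs, abs_abs]; exact hboundA y hy)
      rw [measureReal_def, hAvolR] at this
      exact (le_abs_self _).trans this
    -- bound on complement
    have hGxint : Integrable (fun y => G (x - y)) := hGint.comp_sub_left x
    have htermB : ∫ y in Aᶜ, |h y * G (x - y)| ≤ C / (‖x‖/2) ^ (2*p) := by
      have hmono : ∀ y ∈ Aᶜ, |h y * G (x - y)| ≤ (C / (‖x‖/2) ^ (2*p)) * G (x - y) := by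
        intro y hy
        have hy' : ‖x‖ / 2 < ‖y‖ := by
          simp only [hAdef, Set.mem_compl_iff, mem_closedBall, dist_zero_right, not_le] at hy
          exact hy
        have hy1 : 1 ≤ ‖y‖ := le_trans hx2 hy'.le
        have hh1 : |h y| ≤ C / (‖x‖/2) ^ (2*p) := by
          refine (hh y hy1).trans ?_
          apply div_le_div_of_nonneg_left hC.le (by positivity)
          exact Real.rpow_le_rpow hx2'.le hy'.le (by positivity)
        rw [abs_mul, abs_of_nonneg (hG0 _)]
        exact mul_le_mul_of_nonneg_right hh1 (hG0 _)
      calc ∫ y in Aᶜ, |h y * G (x - y)|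
          ≤ ∫ y in Aᶜ, (C / (‖x‖/2) ^ (2*p)) * G (x - y) := by
            refine setIntegral_mono_on (hf.abs.integrableOn) ?_ hAmeas.compl hmono
            exact (hGxint.const_mul _).integrableOn
        _ ≤ ∫ y, (C / (‖x‖/2) ^ (2*p)) * G (x - y) := by
            refine setIntegral_le_integral (hGxint.const_mul _) ?_
            filter_upwards with y
            have := hG0 (x - y)
            positivity
        _ = C / (‖x‖/2) ^ (2*p) := by
            rw [integral_const_mul, integral_sub_left_eq_self G volume x, hGmass, mul_one]
    have hsplit : ∫ y, |h y * G (x - y)| =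
        (∫ y in A, |h y * G (x - y)|) + ∫ y in Aᶜ, |h y * G (x - y)| :=
      (integral_add_compl hAmeas hf.abs).symm
    have habs : |∫ y, h y * G (x - y)| ≤ ∫ y, |h y * G (x - y)| := by
      have := norm_integral_le_integral_norm (μ := volume) (f := fun y => h y * G (x - y))
      simpa only [Real.norm_eq_abs] using this
    -- final rpow arithmetic
    have hrle1 : r ≤ 2 * q - (n:ℝ) := min_le_right _ _
    have hrle2 : r ≤ 2 * p := (min_le_left _ _).trans (by linarith)
    have hA_final : (C * (C' / (‖x‖/2) ^ (2*q))) * ((‖x‖/2) ^ n * K)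
        ≤ (C * C' * K * 2 ^ (2*q)) / ‖x‖ ^ r := by
      have hpow : (‖x‖/2) ^ n * ((‖x‖/2) ^ (2*q))⁻¹ ≤ 2 ^ (2*q) / ‖x‖ ^ r := by
        have e1 : (‖x‖/2 : ℝ) ^ n = (‖x‖/2) ^ (n:ℝ) := (Real.rpow_natCast _ n).symm
        rw [e1, ← Real.rpow_neg hx2'.le, ← Real.rpow_add hx2']
        have e2 : (‖x‖/2 : ℝ) ^ ((n:ℝ) + -(2*q)) = ((‖x‖/2) ^ (2*q - n))⁻¹ := by
          rw [← Real.rpow_neg hx2'.le]; ring_nf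
        rw [e2]
        have h3 : ‖x‖ ^ r ≤ (‖x‖/2) ^ (2*q-(n:ℝ)) * 2 ^ (2*q) := by
          have : ‖x‖ ^ r ≤ ‖x‖ ^ (2*q-(n:ℝ)) :=
            Real.rpow_le_rpow_of_exponent_le hx1 hrle1
          refine this.trans ?_
          rw [Real.div_rpow hx0.le (by norm_num), div_mul_eq_mul_div]
          rw [le_div_iff₀ (by positivity)]
          apply mul_le_mul_of_nonneg_left _ (by positivity)
          apply Real.rpow_le_rpow_of_exponent_le (by norm_num)
          have : (0:ℝ) ≤ n := by positivity
          linarith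
        rw [inv_eq_one_div, div_le_div_iff₀ (by positivity) hxr]
        nlinarith [h3]
      calc (C * (C' / (‖x‖/2) ^ (2*q))) * ((‖x‖/2) ^ n * K)
          = (C * C' * K) * ((‖x‖/2) ^ n * ((‖x‖/2) ^ (2*q))⁻¹) := by
            field_simp
        _ ≤ (C * C' * K) * (2 ^ (2*q) / ‖x‖ ^ r) :=
            mul_le_mul_of_nonneg_left hpow (by positivity)
        _ = (C * C' * K * 2 ^ (2*q)) / ‖x‖ ^ r := by ring
    have hB_final : C / (‖x‖/2) ^ (2*p) ≤ (C * 2 ^ (2*p)) / ‖x‖ ^ r := by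
      have h1 : ‖x‖ ^ r ≤ ‖x‖ ^ (2*p) := Real.rpow_le_rpow_of_exponent_le hx1 hrle2
      rw [Real.div_rpow hx0.le (by norm_num), div_div_eq_mul_div]
      exact div_le_div_of_nonneg_left (by positivity) hxr h1
    calc |∫ y, h y * G (x - y)|
        ≤ ∫ y, |h y * G (x - y)| := habs
      _ = (∫ y in A, |h y * G (x - y)|) + ∫ y in Aᶜ, |h y * G (x - y)| := hsplit
      _ ≤ (C * C' * K * 2 ^ (2*q)) / ‖x‖ ^ r + (C * 2 ^ (2*p)) / ‖x‖ ^ r := by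
          exact add_le_add (htermA.trans hA_final) (htermB.trans hB_final)
      _ ≤ (C * C' * K * 2 ^ (2 * q) + C * 2 ^ (2 * p) + 1) / ‖x‖ ^ r := by
          rw [← add_div]
          gcongr ?_ / _
          linarith
  · rw [integral_undef hf]
    simp only [abs_zero]
    positivity
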